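/- arXiv:1810.13174 — 6 statements merged into one kernel-verified Lean document; each statement's English description precedes it below -/
import Mathlib

section
/- For every complex number r, the determinant of the 2×2 complex matrix [[(λ+2μ)r² + ρω² − μk², ik(μ+λ)r], [ik(μ+λ)r, μr² + ρω² − (λ+2μ)k²]] equals μ(λ+2μ)(r² − λ₁²)(r² − λ₂²); in particular this determinant vanishes exactly when r ∈ {λ₁, −λ₁, λ₂, −λ₂}. -/
open Complex Matrix

/-- The Fourier-transformed Navier symbol matrix in the root variable `r`. -/
noncomputable def navierMat (μ lam ρ ω k : ℝ) (r : ℂ) : Matrix (Fin 2) (Fin 2) ℂ :=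
  !![((lam : ℂ) + 2 * (μ : ℂ)) * r ^ 2 + (ρ : ℂ) * (ω : ℂ) ^ 2 - (μ : ℂ) * (k : ℂ) ^ 2,
      Complex.I * (k : ℂ) * ((μ : ℂ) + (lam : ℂ)) * r;
      Complex.I * (k : ℂ) * ((μ : ℂ) + (lam : ℂ)) * r,
      (μ : ℂ) * r ^ 2 + (ρ : ℂ) * (ω : ℂ) ^ 2 - ((lam : ℂ) + 2 * (μ : ℂ)) * (k : ℂ) ^ 2]

/-- the determinant of the Navier symbol matrix factorizes as
`μ(λ+2μ)(r² − λ₁²)(r² − λ₂²)`, hence vanishes exactly at `r ∈ {λ₁, −λ₁, λ₂, −λ₂}`. -/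
theorem navier_symbol_det
    (μ lam ρ ω : ℝ) (hμ : 0 < μ) (hlam : 0 < lam) (hρ : 0 < ρ) (hω : 0 < ω)
    (Cp Cs : ℝ) (hCp : Cp = Real.sqrt ((lam + 2 * μ) / ρ)) (hCs : Cs = Real.sqrt (μ / ρ))
    (k : ℝ)
    (l1 l2 : ℂ)
    (hl1 : l1 = ((k ^ 2 - ω ^ 2 / Cs ^ 2 : ℝ) : ℂ) ^ (1 / 2 : ℂ))
    (hl2 : l2 = ((k ^ 2 - ω ^ 2 / Cp ^ 2 : ℝ) : ℂ) ^ (1 / 2 : ℂ)) :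
    ∀ r : ℂ,
      (navierMat μ lam ρ ω k r).det
          = (μ : ℂ) * ((lam : ℂ) + 2 * (μ : ℂ)) * (r ^ 2 - l1 ^ 2) * (r ^ 2 - l2 ^ 2)
        ∧ ((navierMat μ lam ρ ω k r).det = 0 ↔ r = l1 ∨ r = -l1 ∨ r = l2 ∨ r = -l2) := by
  intro r
  have hμ0 : (μ : ℂ) ≠ 0 := by exact_mod_cast hμ.ne'
  have hlm0 : ((lam : ℂ) + 2 * (μ : ℂ)) ≠ 0 := by
    have : (0:ℝ) < lam + 2 * μ := by linarith
    have h := this.ne'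
    push_cast
    exact_mod_cast (by exact_mod_cast this.ne' : ((lam + 2*μ : ℝ) : ℂ) ≠ 0)
  -- squares of l1, l2
  have hCs2 : (Cs:ℝ) ^ 2 = μ / ρ := by
    rw [hCs, sq, Real.mul_self_sqrt (by positivity)]
  have hCp2 : (Cp:ℝ) ^ 2 = (lam + 2*μ) / ρ := by
    rw [hCp, sq, Real.mul_self_sqrt (by positivity)]
  have hsq : ∀ z : ℂ, (z ^ (1/2 : ℂ)) ^ 2 = z := by
    intro z
    rw [one_div]
    exact_mod_cast Complex.cpow_nat_inv_pow z two_ne_zero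
  have hl1sq : l1 ^ 2 = ((k:ℂ)^2 - (ρ:ℂ) * (ω:ℂ)^2 / (μ:ℂ)) := by
    rw [hl1, hsq]
    have : (ω:ℝ) ^ 2 / Cs ^ 2 = ρ * ω ^ 2 / μ := by
      rw [hCs2]; field_simp
    rw [this]; push_cast; ring
  have hl2sq : l2 ^ 2 = ((k:ℂ)^2 - (ρ:ℂ) * (ω:ℂ)^2 / ((lam:ℂ) + 2*(μ:ℂ))) := by
    rw [hl2, hsq]
    have : (ω:ℝ) ^ 2 / Cp ^ 2 = ρ * ω ^ 2 / (lam + 2*μ) := by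
      rw [hCp2]; field_simp
    rw [this]; push_cast; ring
  have hdet : (navierMat μ lam ρ ω k r).det
      = (μ : ℂ) * ((lam : ℂ) + 2 * (μ : ℂ)) * (r ^ 2 - l1 ^ 2) * (r ^ 2 - l2 ^ 2) := by
    rw [navierMat, Matrix.det_fin_two_of, hl1sq, hl2sq]
    have hI : Complex.I ^ 2 = -1 := Complex.I_sq
    field_simp
    ring_nf
    rw [hI]
    ring
  refine ⟨hdet, ?_⟩
  rw [hdet]
  have h1 : r ^ 2 - l1 ^ 2 = (r - l1) * (r + l1) := by ring
  have h2 : r ^ 2 - l2 ^ 2 = (r - l2) * (r + l2) := by ring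
  rw [h1, h2]
  simp only [mul_eq_zero, hμ0, hlm0, false_or, sub_eq_zero, add_eq_zero_iff_eq_neg]
  tauto
end

section
/- Assume k² + λ₁λ₂ ≠ 0 and λ₂ ≠ 0, and let δ ≥ 0. Setting X₁ = (k² + λ₁λ₂)/(k² − λ₁λ₂) and X₂ = −2ikλ₂/(k² − λ₁λ₂), the Schwarz iteration matrix R_δ = M_δ⁻¹ N_δ N_0⁻¹ M_0 equals the explicit matrix [[e^{−δ(λ₁+λ₂)} X₂² (λ₁/λ₂) + e^{−2λ₁δ} X₁², X₁X₂ (e^{−2λ₁δ} − e^{−δ(λ₁+λ₂)})], [X₁X₂ (λ₁/λ₂)(e^{−δ(λ₁+λ₂)} − e^{−2λ₂δ}), e^{−δ(λ₁+λ₂)} X₂² (λ₁/λ₂) + e^{−2λ₂δ} X₁²]]. -/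
open Complex Matrix

/-- The matrix `M_x` whose columns are the two bounded-at `-∞` exponential solutions. -/
noncomputable def Mmat (l1 l2 : ℂ) (k : ℝ) (x : ℝ) : Matrix (Fin 2) (Fin 2) ℂ :=
  !![Complex.exp (l1 * x), -(Complex.I * l2 / (k : ℂ)) * Complex.exp (l2 * x);
     (Complex.I * l1 / (k : ℂ)) * Complex.exp (l1 * x), Complex.exp (l2 * x)]

/-- The matrix `N_x` whose columns are the two bounded-at `+∞` exponential solutions. -/
noncomputable def Nmat (l1 l2 : ℂ) (k : ℝ) (x : ℝ) : Matrix (Fin 2) (Fin 2) ℂ :=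
  !![Complex.exp (-l1 * x), (Complex.I * l2 / (k : ℂ)) * Complex.exp (-l2 * x);
     -(Complex.I * l1 / (k : ℂ)) * Complex.exp (-l1 * x), Complex.exp (-l2 * x)]

set_option maxHeartbeats 1000000

lemma Ninv0 (l1 l2 : ℂ) (k : ℝ) (hk : (k:ℂ) ≠ 0) (hd : (k:ℂ)^2 - l1*l2 ≠ 0) :
    (Nmat l1 l2 k 0)⁻¹ =
      !![(k:ℂ)^2 / ((k:ℂ)^2 - l1*l2), -(Complex.I*l2*(k:ℂ)) / ((k:ℂ)^2 - l1*l2);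
         (Complex.I*l1*(k:ℂ)) / ((k:ℂ)^2 - l1*l2), (k:ℂ)^2 / ((k:ℂ)^2 - l1*l2)] := by
  apply inv_eq_right_inv
  ext i j
  fin_cases i <;> fin_cases j <;>
    simp [Nmat, Matrix.mul_apply, Fin.sum_univ_two, neg_mul] <;>
    field_simp <;>
    (ring_nf; try simp [Complex.I_sq]; try ring_nf)

/-- the Schwarz iteration matrix `R_δ = M_δ⁻¹ N_δ N_0⁻¹ M_0` equals the
explicit matrix of the paper, with `X₁ = (k²+λ₁λ₂)/(k²−λ₁λ₂)` and
`X₂ = −2ikλ₂/(k²−λ₁λ₂)`. -/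
theorem schwarz_iteration_matrix_explicit
    (μ lam ρ ω : ℝ) (hμ : 0 < μ) (hlam : 0 < lam) (hρ : 0 < ρ) (hω : 0 < ω)
    (Cp Cs : ℝ) (hCp : Cp = Real.sqrt ((lam + 2 * μ) / ρ)) (hCs : Cs = Real.sqrt (μ / ρ))
    (k : ℝ) (hk : k ≠ 0)
    (l1 l2 : ℂ)
    (hl1 : l1 = ((k ^ 2 - ω ^ 2 / Cs ^ 2 : ℝ) : ℂ) ^ (1 / 2 : ℂ))
    (hl2 : l2 = ((k ^ 2 - ω ^ 2 / Cp ^ 2 : ℝ) : ℂ) ^ (1 / 2 : ℂ))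
    (hadm : (k : ℂ) ^ 2 + l1 * l2 ≠ 0) (hl2ne : l2 ≠ 0)
    (δ : ℝ) (hδ : 0 ≤ δ)
    (X1 X2 : ℂ)
    (hX1 : X1 = ((k : ℂ) ^ 2 + l1 * l2) / ((k : ℂ) ^ 2 - l1 * l2))
    (hX2 : X2 = -(2 * Complex.I * (k : ℂ) * l2) / ((k : ℂ) ^ 2 - l1 * l2)) :
    (Mmat l1 l2 k δ)⁻¹ * Nmat l1 l2 k δ * (Nmat l1 l2 k 0)⁻¹ * Mmat l1 l2 k 0
      = !![Complex.exp (-(δ : ℂ) * (l1 + l2)) * X2 ^ 2 * (l1 / l2)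
              + Complex.exp (-2 * l1 * δ) * X1 ^ 2,
            X1 * X2 * (Complex.exp (-2 * l1 * δ) - Complex.exp (-(δ : ℂ) * (l1 + l2)));
            X1 * X2 * (l1 / l2)
              * (Complex.exp (-(δ : ℂ) * (l1 + l2)) - Complex.exp (-2 * l2 * δ)),
            Complex.exp (-(δ : ℂ) * (l1 + l2)) * X2 ^ 2 * (l1 / l2)
              + Complex.exp (-2 * l2 * δ) * X1 ^ 2] := by
  have hk' : (k:ℂ) ≠ 0 := by exact_mod_cast Complex.ofReal_ne_zero.mpr hk
  by_cases hne : (k:ℂ)^2 - l1*l2 = 0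
  · have h12 : l1 * l2 = (k:ℂ)^2 := by linear_combination -hne
    have hdet : (Mmat l1 l2 k δ).det = 0 := by
      simp only [Mmat, Matrix.det_fin_two_of]
      field_simp
      have hI := Complex.I_sq
      rw [mul_comm (δ:ℂ) l2]
      linear_combination Complex.exp (l1*δ) * Complex.exp (l2*δ) * (k:ℂ)^2 * hI
        + (Complex.I^2) * Complex.exp (l1*δ) * Complex.exp (l2*δ) * h12
    have hMinv0 : (Mmat l1 l2 k δ)⁻¹ = 0 := by
      apply Matrix.nonsing_inv_apply_not_isUnit
      rw [hdet]; exact not_isUnit_zero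
    rw [hMinv0, Matrix.zero_mul, Matrix.zero_mul, Matrix.zero_mul,
        hX1, hX2, hne, div_zero, div_zero]
    ext i j; fin_cases i <;> fin_cases j <;> simp
  · have hu0 : Complex.exp (l1*(δ:ℂ)) ≠ 0 := Complex.exp_ne_zero _
    have hv0 : Complex.exp (l2*(δ:ℂ)) ≠ 0 := Complex.exp_ne_zero _
    have E1 : Complex.exp (-(2*l1*(δ:ℂ))) = (Complex.exp (l1*δ))⁻¹ * (Complex.exp (l1*δ))⁻¹ := by
      rw [← Complex.exp_neg, ← Complex.exp_add]; ring_nf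
    have E2 : Complex.exp (-(2*l2*(δ:ℂ))) = (Complex.exp (l2*δ))⁻¹ * (Complex.exp (l2*δ))⁻¹ := by
      rw [← Complex.exp_neg, ← Complex.exp_add]; ring_nf
    have E3 : Complex.exp (-((δ:ℂ)*(l1+l2))) = (Complex.exp (l1*δ))⁻¹ * (Complex.exp (l2*δ))⁻¹ := by
      rw [← Complex.exp_neg (l1*δ), ← Complex.exp_neg (l2*δ), ← Complex.exp_add]; ring_nf
    have E4 : Complex.exp (-(l1*(δ:ℂ))) = (Complex.exp (l1*δ))⁻¹ := Complex.exp_neg _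
    have E5 : Complex.exp (-(l2*(δ:ℂ))) = (Complex.exp (l2*δ))⁻¹ := Complex.exp_neg _
    -- abbreviations
    set D : ℂ := (k:ℂ)^2 - l1*l2 with hD
    set n1 : ℂ := (k:ℂ)^2 + l1*l2 with hn1
    set n2 : ℂ := -(2*Complex.I*(k:ℂ)*l2) with hn2
    set uI : ℂ := (Complex.exp (l1*(δ:ℂ)))⁻¹ with huI
    set vI : ℂ := (Complex.exp (l2*(δ:ℂ)))⁻¹ with hvI
    have hc : D^2 * l2 ≠ 0 := mul_ne_zero (pow_ne_zero _ hne) hl2ne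
    -- scaled polynomial matrices
    set Qp : Matrix (Fin 2) (Fin 2) ℂ :=
      !![D*l2*n1, D*l2*n2; -(D*l1*n2), D*l2*n1] with hQp
    set Rp : Matrix (Fin 2) (Fin 2) ℂ :=
      !![uI*vI*n2^2*l1 + uI*uI*n1^2*l2, n1*n2*l2*(uI*uI - uI*vI);
         n1*n2*l1*(uI*vI - vI*vI), uI*vI*n2^2*l1 + vI*vI*n1^2*l2] with hRp
    -- step 1 : N0⁻¹ M0 = (D²l2)⁻¹ • Qp
    have hQ : (Nmat l1 l2 k 0)⁻¹ * Mmat l1 l2 k 0 = (D^2*l2)⁻¹ • Qp := by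
      rw [Ninv0 l1 l2 k hk' hne]
      ext i j
      fin_cases i <;> fin_cases j <;>
        simp [Mmat, Matrix.mul_apply, Fin.sum_univ_two, hQp, ← hD, ← hn1, ← hn2] <;>
        field_simp [hne] <;>
        (ring_nf; try simp [Complex.I_sq]; try ring_nf) <;>
        (simp only [hn1, hn2]; ring)
    -- step 2 : R = (D²l2)⁻¹ • Rp
    have hR : (!![Complex.exp (-(δ : ℂ) * (l1 + l2)) * X2 ^ 2 * (l1 / l2)
              + Complex.exp (-2 * l1 * δ) * X1 ^ 2,
            X1 * X2 * (Complex.exp (-2 * l1 * δ) - Complex.exp (-(δ : ℂ) * (l1 + l2)));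
            X1 * X2 * (l1 / l2)
              * (Complex.exp (-(δ : ℂ) * (l1 + l2)) - Complex.exp (-2 * l2 * δ)),
            Complex.exp (-(δ : ℂ) * (l1 + l2)) * X2 ^ 2 * (l1 / l2)
              + Complex.exp (-2 * l2 * δ) * X1 ^ 2] : Matrix (Fin 2) (Fin 2) ℂ)
        = (D^2*l2)⁻¹ • Rp := by
      ext i j
      fin_cases i <;> fin_cases j <;>
        simp [E1, E2, E3, hX1, hX2, hRp, ← hD, ← hn1, ← hn2, ← huI, ← hvI] <;>
        field_simp [hne, hu0, hv0] <;>
        (first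
          | ring1
          | (left; trivial)
          | (ring_nf; try simp [Complex.I_sq]; try ring_nf)
          | (try rw [hD]; ring_nf; try simp [Complex.I_sq]; try ring_nf))
    -- step 3 : the polynomial identity
    have huI0 : uI ≠ 0 := inv_ne_zero hu0
    have hvI0 : vI ≠ 0 := inv_ne_zero hv0
    have huu1 : Complex.exp (l1*(δ:ℂ)) * uI = 1 := mul_inv_cancel₀ hu0
    have hvv1 : Complex.exp (l2*(δ:ℂ)) * vI = 1 := mul_inv_cancel₀ hv0
    have H3 : Complex.exp (l1*(δ:ℂ)) * (Complex.exp (l1*(δ:ℂ)))⁻¹ = 1 := mul_inv_cancel₀ hu0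
    have H4 : Complex.exp (l2*(δ:ℂ)) * (Complex.exp (l2*(δ:ℂ)))⁻¹ = 1 := mul_inv_cancel₀ hv0
    have H5 : (k:ℂ) * ((k:ℂ))⁻¹ = 1 := mul_inv_cancel₀ hk'
    have HI : Complex.I * Complex.I = -1 := Complex.I_mul_I
    have key2 : Nmat l1 l2 k δ * Qp = Mmat l1 l2 k δ * Rp := by
      ext i j
      fin_cases i <;> fin_cases j <;>
        simp [Mmat, Nmat, Matrix.mul_apply, Fin.sum_univ_two, hQp, hRp,
          hD, hn1, hn2, huI, hvI]
      · linear_combination ((-4*(Complex.exp (l2*(δ:ℂ)))⁻¹*(k:ℂ)^2*Complex.I^2*l1*l2^2) + (-1*(Complex.exp (l1*(δ:ℂ)))⁻¹*(k:ℂ)^4*l2) + (-2*(Complex.exp (l1*(δ:ℂ)))⁻¹*(k:ℂ)^2*l1*l2^2) + (-1*(Complex.exp (l1*(δ:ℂ)))⁻¹*l1^2*l2^3)) * H3 + ((-2*(Complex.exp (l1*(δ:ℂ)))⁻¹*(k:ℂ)^3*((k:ℂ))⁻¹*Complex.I^2*l1*l2^2) + (2*(Complex.exp (l2*(δ:ℂ)))⁻¹*(k:ℂ)^3*((k:ℂ))⁻¹*Complex.I^2*l1*l2^2)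 + (-2*(Complex.exp (l1*(δ:ℂ)))⁻¹*(k:ℂ)*((k:ℂ))⁻¹*Complex.I^2*l1^2*l2^3) + (2*(Complex.exp (l2*(δ:ℂ)))⁻¹*(k:ℂ)*((k:ℂ))⁻¹*Complex.I^2*l1^2*l2^3)) * H4 + ((4*(Complex.exp (l2*(δ:ℂ)))⁻¹*(k:ℂ)^2*Complex.I^2*l1*l2^2) + (-2*(Complex.exp (l1*(δ:ℂ)))⁻¹*(k:ℂ)^2*Complex.I^2*l1*l2^2) + (-2*(Complex.exp (l1*(δ:ℂ)))⁻¹*Complex.I^2*l1^2*l2^3)) * H5 + ((-2*(Complex.exp (l1*(δ:ℂ)))⁻¹*(k:ℂ)^2*l1*l2^2) + (-2*(Complex.exp (l1*(δ:ℂ)))⁻¹*l1^2*l2^3)) * HI + (((k:ℂ)^4*l2) + (-1*l1^2*l2^3)) * E4 + ((2*(k:ℂ)^3*((k:ℂ))⁻¹*Complex.I^2*l1*l2^2) + (-2*(k:ℂ)*((k:ℂ))⁻¹*Complex.I^2*l1^2*l2^3)) * E5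
      · linear_combination ((2*(Complex.exp (l1*(δ:ℂ)))⁻¹*(k:ℂ)^3*Complex.I*l2^2) + (-2*(Complex.exp (l2*(δ:ℂ)))⁻¹*(k:ℂ)^3*Complex.I*l2^2) + (2*(Complex.exp (l1*(δ:ℂ)))⁻¹*(k:ℂ)*Complex.I*l1*l2^3) + (-2*(Complex.exp (l2*(δ:ℂ)))⁻¹*(k:ℂ)*Complex.I*l1*l2^3)) * H3 + ((4*(Complex.exp (l1*(δ:ℂ)))⁻¹*(k:ℂ)^2*((k:ℂ))⁻¹*Complex.I^3*l1*l2^3) + ((Complex.exp (l2*(δ:ℂ)))⁻¹*(k:ℂ)^4*((k:ℂ))⁻¹*Complex.I*l2^2) + (2*(Complex.exp (l2*(δ:ℂ)))⁻¹*(k:ℂ)^2*((k:ℂ))⁻¹*Complex.I*l1*l2^3) + ((Complex.exp (l2*(δ:ℂ)))⁻¹*((k:ℂ))⁻¹*Complex.I*l1^2*l2^4)) * H4 + ((2*(Complex.exp (l2*(δ:ℂ)))⁻¹*(k:ℂ)^3*Complex.I*l2^2) + (4*(Complex.exp (l1*(δ:ℂ)))⁻¹*(k:ℂ)*Complex.I^3*l1*l2^3)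 + (2*(Complex.exp (l2*(δ:ℂ)))⁻¹*(k:ℂ)*Complex.I*l1*l2^3)) * H5 + ((4*(Complex.exp (l1*(δ:ℂ)))⁻¹*(k:ℂ)*Complex.I*l1*l2^3)) * HI + ((-2*(k:ℂ)^3*Complex.I*l2^2) + (2*(k:ℂ)*Complex.I*l1*l2^3)) * E4 + (((k:ℂ)^4*((k:ℂ))⁻¹*Complex.I*l2^2) + (-1*((k:ℂ))⁻¹*Complex.I*l1^2*l2^4)) * E5
      · linear_combination ((-4*(Complex.exp (l2*(δ:ℂ)))⁻¹*(k:ℂ)^2*((k:ℂ))⁻¹*Complex.I^3*l1^2*l2^2) + (-1*(Complex.exp (l1*(δ:ℂ)))⁻¹*(k:ℂ)^4*((k:ℂ))⁻¹*Complex.I*l1*l2) + (-2*(Complex.exp (l1*(δ:ℂ)))⁻¹*(k:ℂ)^2*((k:ℂ))⁻¹*Complex.I*l1^2*l2^2) + (-1*(Complex.exp (l1*(δ:ℂ)))⁻¹*((k:ℂ))⁻¹*Complex.I*l1^3*l2^3)) * H3 + ((2*(Complex.exp (l1*(δ:ℂ)))⁻¹*(k:ℂ)^3*Complex.I*l1*l2)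 + (-2*(Complex.exp (l2*(δ:ℂ)))⁻¹*(k:ℂ)^3*Complex.I*l1*l2) + (2*(Complex.exp (l1*(δ:ℂ)))⁻¹*(k:ℂ)*Complex.I*l1^2*l2^2) + (-2*(Complex.exp (l2*(δ:ℂ)))⁻¹*(k:ℂ)*Complex.I*l1^2*l2^2)) * H4 + ((-2*(Complex.exp (l1*(δ:ℂ)))⁻¹*(k:ℂ)^3*Complex.I*l1*l2) + (-4*(Complex.exp (l2*(δ:ℂ)))⁻¹*(k:ℂ)*Complex.I^3*l1^2*l2^2) + (-2*(Complex.exp (l1*(δ:ℂ)))⁻¹*(k:ℂ)*Complex.I*l1^2*l2^2)) * H5 + ((-4*(Complex.exp (l2*(δ:ℂ)))⁻¹*(k:ℂ)*Complex.I*l1^2*l2^2)) * HI + ((-1*(k:ℂ)^4*((k:ℂ))⁻¹*Complex.I*l1*l2) + (((k:ℂ))⁻¹*Complex.I*l1^3*l2^3)) * E4 + ((2*(k:ℂ)^3*Complex.I*l1*l2) + (-2*(k:ℂ)*Complex.I*l1^2*l2^2)) * E5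
      · linear_combination ((2*(Complex.exp (l1*(δ:ℂ)))⁻¹*(k:ℂ)^3*((k:ℂ))⁻¹*Complex.I^2*l1*l2^2) + (-2*(Complex.exp (l2*(δ:ℂ)))⁻¹*(k:ℂ)^3*((k:ℂ))⁻¹*Complex.I^2*l1*l2^2) + (2*(Complex.exp (l1*(δ:ℂ)))⁻¹*(k:ℂ)*((k:ℂ))⁻¹*Complex.I^2*l1^2*l2^3) + (-2*(Complex.exp (l2*(δ:ℂ)))⁻¹*(k:ℂ)*((k:ℂ))⁻¹*Complex.I^2*l1^2*l2^3)) * H3 + ((-4*(Complex.exp (l1*(δ:ℂ)))⁻¹*(k:ℂ)^2*Complex.I^2*l1*l2^2) + (-1*(Complex.exp (l2*(δ:ℂ)))⁻¹*(k:ℂ)^4*l2) + (-2*(Complex.exp (l2*(δ:ℂ)))⁻¹*(k:ℂ)^2*l1*l2^2) + (-1*(Complex.exp (l2*(δ:ℂ)))⁻¹*l1^2*l2^3)) * H4 + ((4*(Complex.exp (l1*(δ:ℂ)))⁻¹*(k:ℂ)^2*Complex.I^2*l1*l2^2) + (-2*(Complex.exp (l2*(δ:ℂ)))⁻¹*(k:ℂ)^2*Complex.I^2*l1*l2^2)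 + (-2*(Complex.exp (l2*(δ:ℂ)))⁻¹*Complex.I^2*l1^2*l2^3)) * H5 + ((-2*(Complex.exp (l2*(δ:ℂ)))⁻¹*(k:ℂ)^2*l1*l2^2) + (-2*(Complex.exp (l2*(δ:ℂ)))⁻¹*l1^2*l2^3)) * HI + ((2*(k:ℂ)^3*((k:ℂ))⁻¹*Complex.I^2*l1*l2^2) + (-2*(k:ℂ)*((k:ℂ))⁻¹*Complex.I^2*l1^2*l2^3)) * E4 + (((k:ℂ)^4*l2) + (-1*l1^2*l2^3)) * E5
    -- step 4 : invertibility of Mδ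
    have hdet : (Mmat l1 l2 k δ).det
        = Complex.exp (l1*δ) * Complex.exp (l2*δ) * D / (k:ℂ)^2 := by
      simp only [Mmat, Matrix.det_fin_two_of]
      field_simp
      ring_nf
      try simp [Complex.I_sq, ← hD]
      try ring_nf
      try linear_combination Complex.exp (l1*↑δ) * Complex.exp (l2*↑δ) * (k:ℂ)^2 * Complex.I_sq
      exact hD.symm
    have hu : IsUnit (Mmat l1 l2 k δ).det := by
      rw [hdet, isUnit_iff_ne_zero]
      exact div_ne_zero (mul_ne_zero (mul_ne_zero hu0 hv0) hne) (pow_ne_zero _ hk')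
    -- assemble
    rw [Matrix.mul_assoc ((Mmat l1 l2 k δ)⁻¹ * Nmat l1 l2 k δ) ((Nmat l1 l2 k 0)⁻¹)
        (Mmat l1 l2 k 0), hQ, hR, Matrix.mul_smul, Matrix.mul_assoc, key2,
      ← Matrix.mul_assoc, Matrix.nonsing_inv_mul _ hu, Matrix.one_mul]
end

section
/- Assume k² + λ₁λ₂ ≠ 0 and k² − λ₁λ₂ ≠ 0, and let δ ≥ 0. Setting X = ((k² + λ₁λ₂)/(k² − λ₁λ₂))(e^{−λ₁δ} − e^{−λ₂δ}), the Schwarz iteration matrix R_δ = M_δ⁻¹ N_δ N_0⁻¹ M_0 satisfies trace(R_δ) = X² + 2e^{−δ(λ₁+λ₂)} and det(R_δ) = e^{−2δ(λ₁+λ₂)}. -/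
open Complex Matrix

set_option maxHeartbeats 1600000 in
/-- with `X = ((k²+λ₁λ₂)/(k²−λ₁λ₂))(e^{−λ₁δ} − e^{−λ₂δ})`, the Schwarz
iteration matrix `R_δ = M_δ⁻¹ N_δ N_0⁻¹ M_0` satisfies
`trace R_δ = X² + 2 e^{−δ(λ₁+λ₂)}` and `det R_δ = e^{−2δ(λ₁+λ₂)}`. -/
theorem schwarz_iteration_matrix_trace_det
    (μ lam ρ ω : ℝ) (hμ : 0 < μ) (hlam : 0 < lam) (hρ : 0 < ρ) (hω : 0 < ω)
    (Cp Cs : ℝ) (hCp : Cp = Real.sqrt ((lam + 2 * μ) / ρ)) (hCs : Cs = Real.sqrt (μ / ρ))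
    (k : ℝ) (hk : k ≠ 0)
    (l1 l2 : ℂ)
    (hl1 : l1 = ((k ^ 2 - ω ^ 2 / Cs ^ 2 : ℝ) : ℂ) ^ (1 / 2 : ℂ))
    (hl2 : l2 = ((k ^ 2 - ω ^ 2 / Cp ^ 2 : ℝ) : ℂ) ^ (1 / 2 : ℂ))
    (hadmp : (k : ℂ) ^ 2 + l1 * l2 ≠ 0) (hadmm : (k : ℂ) ^ 2 - l1 * l2 ≠ 0)
    (δ : ℝ) (hδ : 0 ≤ δ)
    (X : ℂ)
    (hX : X = ((k : ℂ) ^ 2 + l1 * l2) / ((k : ℂ) ^ 2 - l1 * l2)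
              * (Complex.exp (-l1 * δ) - Complex.exp (-l2 * δ))) :
    ((Mmat l1 l2 k δ)⁻¹ * Nmat l1 l2 k δ * (Nmat l1 l2 k 0)⁻¹ * Mmat l1 l2 k 0).trace
        = X ^ 2 + 2 * Complex.exp (-(δ : ℂ) * (l1 + l2))
      ∧ ((Mmat l1 l2 k δ)⁻¹ * Nmat l1 l2 k δ * (Nmat l1 l2 k 0)⁻¹ * Mmat l1 l2 k 0).det
        = Complex.exp (-2 * (δ : ℂ) * (l1 + l2)) := by

  have hK : (k : ℂ) ≠ 0 := Complex.ofReal_ne_zero.mpr hk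
  have hI2 : Complex.I ^ 2 = -1 := Complex.I_sq
  have hI3 : Complex.I ^ 3 = -Complex.I := by rw [pow_succ, hI2]; ring
  have hI4 : Complex.I ^ 4 = 1 := by rw [pow_succ, hI3]; simp [Complex.I_mul_I]
  have hI5 : Complex.I ^ 5 = Complex.I := by rw [pow_succ, hI4, one_mul]
  have hI6 : Complex.I ^ 6 = -1 := by rw [pow_succ, hI5, Complex.I_mul_I]
  have hI7 : Complex.I ^ 7 = -Complex.I := by rw [pow_succ, hI6]; ring
  have hI8 : Complex.I ^ 8 = 1 := by rw [pow_succ, hI7]; simp [Complex.I_mul_I]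
  set K : ℂ := (k : ℂ) with hKdef
  set a : ℂ := Complex.exp (l1 * δ) with ha
  set b : ℂ := Complex.exp (l2 * δ) with hb
  have ha0 : a ≠ 0 := Complex.exp_ne_zero _
  have hb0 : b ≠ 0 := Complex.exp_ne_zero _
  have ea : Complex.exp (-l1 * δ) = a⁻¹ := by rw [ha, neg_mul, Complex.exp_neg]
  have eb : Complex.exp (-l2 * δ) = b⁻¹ := by rw [hb, neg_mul, Complex.exp_neg]
  have ea' : Complex.exp (-(l1 * δ)) = a⁻¹ := by rw [ha, Complex.exp_neg]
  have eb' : Complex.exp (-(l2 * δ)) = b⁻¹ := by rw [hb, Complex.exp_neg]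
  have ec : Complex.exp (-(δ : ℂ) * (l1 + l2)) = (a * b)⁻¹ := by
    rw [ha, hb, ← Complex.exp_add, ← Complex.exp_neg]; congr 1; ring
  have ed : Complex.exp (-2 * (δ : ℂ) * (l1 + l2)) = (a * b * (a * b))⁻¹ := by
    rw [ha, hb, ← Complex.exp_add, ← Complex.exp_add, ← Complex.exp_neg]
    congr 1; ring
  have hMd : (Mmat l1 l2 k δ)⁻¹
      = !![K ^ 2 / (K ^ 2 - l1 * l2) * a⁻¹, Complex.I * l2 * K / (K ^ 2 - l1 * l2) * a⁻¹;
           -(Complex.I * l1 * K / (K ^ 2 - l1 * l2)) * b⁻¹, K ^ 2 / (K ^ 2 - l1 * l2) * b⁻¹] := by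
    apply Matrix.inv_eq_right_inv
    ext i j
    fin_cases i <;> fin_cases j <;>
      simp [Mmat, Matrix.mul_apply, Fin.sum_univ_two, ← ha, ← hb, ← hKdef] <;>
      field_simp <;> (first | ring1 | ((try ring_nf); simp only [hI2, hI3, hI4, hI5, hI6, hI7, hI8]; ring1))
  have hN0 : (Nmat l1 l2 k 0)⁻¹
      = !![K ^ 2 / (K ^ 2 - l1 * l2), -(Complex.I * l2 * K / (K ^ 2 - l1 * l2));
           Complex.I * l1 * K / (K ^ 2 - l1 * l2), K ^ 2 / (K ^ 2 - l1 * l2)] := by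
    apply Matrix.inv_eq_right_inv
    ext i j
    fin_cases i <;> fin_cases j <;>
      simp [Nmat, Matrix.mul_apply, Fin.sum_univ_two, ← hKdef] <;>
      field_simp <;> (first | ring1 | ((try ring_nf); simp only [hI2, hI3, hI4, hI5, hI6, hI7, hI8]; ring1))
  have hB : (Mmat l1 l2 k δ)⁻¹ * Nmat l1 l2 k δ
      = ((K ^ 2 - l1 * l2)⁻¹) •
        !![(K ^ 2 + l1 * l2) * (a⁻¹ * a⁻¹), 2 * Complex.I * l2 * K * (a⁻¹ * b⁻¹);
           -(2 * Complex.I * l1 * K) * (a⁻¹ * b⁻¹), (K ^ 2 + l1 * l2) * (b⁻¹ * b⁻¹)] := by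
    rw [hMd]
    ext i j
    fin_cases i <;> fin_cases j <;>
      simp only [Nmat, Matrix.mul_apply, Fin.sum_univ_two, ea, eb, ea', eb', ← hKdef,
        Matrix.smul_apply, smul_eq_mul,
        Matrix.cons_val', Matrix.cons_val_zero, Matrix.cons_val_one, Matrix.head_cons,
        Matrix.head_fin_const, Matrix.empty_val', Matrix.cons_val_fin_one, Matrix.of_apply,
        neg_mul, Fin.zero_eta, Fin.mk_one] <;>
      field_simp [ha0, hb0, hK, hadmm] <;>
      (first | ring1 | ((try ring_nf); simp only [hI2, hI3, hI4, hI5, hI6, hI7, hI8]; ring1))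
  have hA : (Nmat l1 l2 k 0)⁻¹ * Mmat l1 l2 k 0
      = ((K ^ 2 - l1 * l2)⁻¹) •
        !![(K ^ 2 + l1 * l2), -(2 * Complex.I * l2 * K);
           2 * Complex.I * l1 * K, (K ^ 2 + l1 * l2)] := by
    rw [hN0]
    ext i j
    fin_cases i <;> fin_cases j <;>
      simp only [Mmat, Matrix.mul_apply, Fin.sum_univ_two, Complex.ofReal_zero, mul_zero,
        Complex.exp_zero, ← hKdef, Matrix.smul_apply, smul_eq_mul,
        Matrix.cons_val', Matrix.cons_val_zero, Matrix.cons_val_one, Matrix.head_cons,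
        Matrix.head_fin_const, Matrix.empty_val', Matrix.cons_val_fin_one, Matrix.of_apply,
        mul_one, neg_mul, Fin.zero_eta, Fin.mk_one] <;>
      field_simp [ha0, hb0, hK, hadmm] <;>
      (first | ring1 | ((try ring_nf); simp only [hI2, hI3, hI4, hI5, hI6, hI7, hI8]; ring1))
  have hassoc : (Mmat l1 l2 k δ)⁻¹ * Nmat l1 l2 k δ * (Nmat l1 l2 k 0)⁻¹ * Mmat l1 l2 k 0
      = ((Mmat l1 l2 k δ)⁻¹ * Nmat l1 l2 k δ) * ((Nmat l1 l2 k 0)⁻¹ * Mmat l1 l2 k 0) := by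
    rw [Matrix.mul_assoc]
  have ec2 : Complex.exp (-(δ : ℂ) * (l1 + l2)) = a⁻¹ * b⁻¹ := by rw [ec, mul_inv]
  have ed2 : Complex.exp (-2 * (δ : ℂ) * (l1 + l2)) = a⁻¹ * b⁻¹ * (a⁻¹ * b⁻¹) := by
    rw [ed]; rw [mul_inv, mul_inv]
  rw [hassoc, hB, hA, hX, smul_mul_smul_comm]
  constructor
  · rw [ec2, Matrix.trace_smul]
    simp only [Matrix.mul_fin_two, Matrix.trace_fin_two_of, ea, eb, ea', eb', smul_eq_mul]
    generalize a⁻¹ = u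
    generalize b⁻¹ = v
    field_simp [hK, hadmm]
    first | ring1 | ((try ring_nf); simp only [hI2, hI3, hI4, hI5, hI6, hI7, hI8]; ring1)
  · rw [ed2, Matrix.det_smul]
    simp only [Matrix.mul_fin_two, Matrix.det_fin_two_of, ea, eb, ea', eb', smul_eq_mul,
      Fintype.card_fin]
    generalize a⁻¹ = u
    generalize b⁻¹ = v
    field_simp [hK, hadmm]
    first | ring1 | ((try ring_nf); simp only [hI2, hI3, hI4, hI5, hI6, hI7, hI8]; ring1)
end

section
/- Assume k² + λ₁λ₂ ≠ 0 and k² − λ₁λ₂ ≠ 0, and let δ ≥ 0. Then the eigenvalues of the Schwarz iteration matrix R_δ = M_δ⁻¹ N_δ N_0⁻¹ M_0 are exactly the two complex numbers r₊ and r₋ given by r± = X²/2 + e^{−δ(λ₁+λ₂)} ± (1/2)√(X²(X² + 4e^{−δ(λ₁+λ₂)})), where X = ((k² + λ₁λ₂)/(k² − λ₁λ₂))(e^{−λ₁δ} − e^{−λ₂δ}); that is, r₊ and r₋ are the roots of the characteristic polynomial of R_δ. -/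
open Complex Matrix

section Helpers
open Polynomial

set_option maxHeartbeats 1000000 in
lemma schwarz_aux (c m1 m2 p q : ℂ) (hc : c ≠ 0) (hp : p ≠ 0) (hq : q ≠ 0)
    (hm : c ^ 2 + m1 * m2 ≠ 0) :
    ((!![p⁻¹, -(m2 / c) * q⁻¹; (m1 / c) * p⁻¹, q⁻¹] : Matrix (Fin 2) (Fin 2) ℂ)⁻¹
        * !![p, (m2 / c) * q; -(m1 / c) * p, q]
        * (!![1, m2 / c; -(m1 / c), 1] : Matrix (Fin 2) (Fin 2) ℂ)⁻¹
        * !![1, -(m2 / c); (m1 / c), 1]).trace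
        = ((c ^ 2 - m1 * m2) / (c ^ 2 + m1 * m2) * (p - q)) ^ 2 + 2 * (p * q)
      ∧ ((!![p⁻¹, -(m2 / c) * q⁻¹; (m1 / c) * p⁻¹, q⁻¹] : Matrix (Fin 2) (Fin 2) ℂ)⁻¹
        * !![p, (m2 / c) * q; -(m1 / c) * p, q]
        * (!![1, m2 / c; -(m1 / c), 1] : Matrix (Fin 2) (Fin 2) ℂ)⁻¹
        * !![1, -(m2 / c); (m1 / c), 1]).det = (p * q) ^ 2 := by
  set S : ℂ := c ^ 2 + m1 * m2 with hS
  set T : ℂ := c ^ 2 - m1 * m2 with hT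
  have hAinv : (!![p⁻¹, -(m2 / c) * q⁻¹; (m1 / c) * p⁻¹, q⁻¹] : Matrix (Fin 2) (Fin 2) ℂ)⁻¹
      = !![c ^ 2 * p / S, c * m2 * p / S; -(c * m1 * q) / S, c ^ 2 * q / S] := by
    apply Matrix.inv_eq_right_inv
    ext i j
    fin_cases i <;> fin_cases j <;>
      simp [Matrix.mul_apply, Fin.sum_univ_two, Matrix.one_apply] <;>
      field_simp <;> ring
  have hDinv : (!![1, m2 / c; -(m1 / c), 1] : Matrix (Fin 2) (Fin 2) ℂ)⁻¹
      = !![c ^ 2 / S, -(c * m2) / S; c * m1 / S, c ^ 2 / S] := by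
    apply Matrix.inv_eq_right_inv
    ext i j
    fin_cases i <;> fin_cases j <;>
      simp [Matrix.mul_apply, Fin.sum_univ_two, Matrix.one_apply] <;>
      field_simp <;> ring
  rw [hAinv, hDinv]
  have hAB : (!![c ^ 2 * p / S, c * m2 * p / S; -(c * m1 * q) / S, c ^ 2 * q / S]
        * !![p, (m2 / c) * q; -(m1 / c) * p, q] : Matrix (Fin 2) (Fin 2) ℂ)
      = !![T * p ^ 2 / S, 2 * c * m2 * p * q / S;
           -(2 * c * m1 * p * q) / S, T * q ^ 2 / S] := by
    ext i j
    fin_cases i <;> fin_cases j <;>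
      simp [Matrix.mul_apply, Fin.sum_univ_two] <;> field_simp <;> ring
  have hDE : (!![c ^ 2 / S, -(c * m2) / S; c * m1 / S, c ^ 2 / S]
        * !![1, -(m2 / c); (m1 / c), 1] : Matrix (Fin 2) (Fin 2) ℂ)
      = !![T / S, -(2 * c * m2) / S; 2 * c * m1 / S, T / S] := by
    ext i j
    fin_cases i <;> fin_cases j <;>
      simp [Matrix.mul_apply, Fin.sum_univ_two] <;> field_simp <;> ring
  rw [hAB, Matrix.mul_assoc, hDE]
  constructor
  · rw [Matrix.mul_fin_two, Matrix.trace_fin_two_of]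
    have h4 : S ^ 2 - T ^ 2 = 4 * c ^ 2 * (m1 * m2) := by rw [hS, hT]; ring
    field_simp
    linear_combination (2 * p * q) * h4
  · rw [Matrix.det_mul, Matrix.det_fin_two_of, Matrix.det_fin_two_of]
    field_simp
    ring


lemma charpoly_fin_two' (A : Matrix (Fin 2) (Fin 2) ℂ) :
    A.charpoly = X ^ 2 - C A.trace * X + C A.det := by
  rw [Matrix.charpoly, Matrix.det_fin_two, Matrix.charmatrix_apply_eq,
    Matrix.charmatrix_apply_eq, Matrix.charmatrix_apply_ne _ _ _ (by decide),
    Matrix.charmatrix_apply_ne _ _ _ (by decide), Matrix.trace_fin_two, Matrix.det_fin_two]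
  simp only [map_sub, Polynomial.C_mul, map_add]
  ring

lemma spec_char (A : Matrix (Fin 2) (Fin 2) ℂ) (rp rm : ℂ)
    (htr : A.trace = rp + rm) (hdet : A.det = rp * rm) :
    spectrum ℂ A = {rp, rm} ∧ A.charpoly = (X - C rp) * (X - C rm) := by
  have hcp : A.charpoly = (X - C rp) * (X - C rm) := by
    rw [charpoly_fin_two', htr, hdet]
    simp only [map_add, Polynomial.C_mul]
    ring
  refine ⟨?_, hcp⟩
  ext z
  have hdz : (algebraMap ℂ (Matrix (Fin 2) (Fin 2) ℂ) z - A).det = (z - rp) * (z - rm) := by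
    have hev : A.charpoly.eval z = (z - rp) * (z - rm) := by simp [hcp]
    rw [charpoly_fin_two'] at hev
    simp only [Polynomial.eval_add, Polynomial.eval_sub, Polynomial.eval_pow,
      Polynomial.eval_mul, Polynomial.eval_C, Polynomial.eval_X,
      Matrix.trace_fin_two, Matrix.det_fin_two] at hev
    norm_num [Matrix.det_fin_two, Matrix.algebraMap_matrix_apply, Fin.ext_iff]
    linear_combination hev
  rw [spectrum.mem_iff]
  simp only [Matrix.isUnit_iff_isUnit_det, hdz, isUnit_iff_ne_zero, ne_eq, not_not,
    mul_eq_zero, sub_eq_zero, Set.mem_insert_iff, Set.mem_singleton_iff]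

end Helpers

/-- the eigenvalues of the Schwarz iteration matrix `R_δ = M_δ⁻¹ N_δ N_0⁻¹ M_0`
are exactly `r± = X²/2 + e^{−δ(λ₁+λ₂)} ± (1/2)√(X²(X² + 4e^{−δ(λ₁+λ₂)}))`, i.e. `r₊, r₋`
are the roots of the characteristic polynomial of `R_δ`. -/
theorem schwarz_iteration_matrix_eigenvalues
    (μ lam ρ ω : ℝ) (hμ : 0 < μ) (hlam : 0 < lam) (hρ : 0 < ρ) (hω : 0 < ω)
    (Cp Cs : ℝ) (hCp : Cp = Real.sqrt ((lam + 2 * μ) / ρ)) (hCs : Cs = Real.sqrt (μ / ρ))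
    (k : ℝ) (hk : k ≠ 0)
    (l1 l2 : ℂ)
    (hl1 : l1 = ((k ^ 2 - ω ^ 2 / Cs ^ 2 : ℝ) : ℂ) ^ (1 / 2 : ℂ))
    (hl2 : l2 = ((k ^ 2 - ω ^ 2 / Cp ^ 2 : ℝ) : ℂ) ^ (1 / 2 : ℂ))
    (hadmp : (k : ℂ) ^ 2 + l1 * l2 ≠ 0) (hadmm : (k : ℂ) ^ 2 - l1 * l2 ≠ 0)
    (δ : ℝ) (hδ : 0 ≤ δ)
    (X E rp rm : ℂ)
    (hX : X = ((k : ℂ) ^ 2 + l1 * l2) / ((k : ℂ) ^ 2 - l1 * l2)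
              * (Complex.exp (-l1 * δ) - Complex.exp (-l2 * δ)))
    (hE : E = Complex.exp (-(δ : ℂ) * (l1 + l2)))
    (hrp : rp = X ^ 2 / 2 + E + (X ^ 2 * (X ^ 2 + 4 * E)) ^ (1 / 2 : ℂ) / 2)
    (hrm : rm = X ^ 2 / 2 + E - (X ^ 2 * (X ^ 2 + 4 * E)) ^ (1 / 2 : ℂ) / 2) :
    spectrum ℂ ((Mmat l1 l2 k δ)⁻¹ * Nmat l1 l2 k δ * (Nmat l1 l2 k 0)⁻¹ * Mmat l1 l2 k 0)
        = {rp, rm}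
      ∧ ((Mmat l1 l2 k δ)⁻¹ * Nmat l1 l2 k δ * (Nmat l1 l2 k 0)⁻¹ * Mmat l1 l2 k 0).charpoly
        = (Polynomial.X - Polynomial.C rp) * (Polynomial.X - Polynomial.C rm) := by
  have hc : (k : ℂ) ≠ 0 := Complex.ofReal_ne_zero.mpr hk
  set p : ℂ := Complex.exp (-l1 * (δ : ℂ)) with hpdef
  set q : ℂ := Complex.exp (-l2 * (δ : ℂ)) with hqdef
  have hp : p ≠ 0 := Complex.exp_ne_zero _
  have hq : q ≠ 0 := Complex.exp_ne_zero _
  have hII : Complex.I * l1 * (Complex.I * l2) = -(l1 * l2) := by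
    have := Complex.I_mul_I
    linear_combination l1 * l2 * this
  have hm : (k : ℂ) ^ 2 + Complex.I * l1 * (Complex.I * l2) ≠ 0 := by
    rw [hII]; simpa [sub_eq_add_neg] using hadmm
  have key := schwarz_aux (k : ℂ) (Complex.I * l1) (Complex.I * l2) p q hc hp hq hm
  have e1 : Complex.exp (l1 * (δ : ℂ)) = p⁻¹ := by
    rw [hpdef, show -l1 * (δ : ℂ) = -(l1 * δ) by ring, Complex.exp_neg, inv_inv]
  have e2 : Complex.exp (l2 * (δ : ℂ)) = q⁻¹ := by
    rw [hqdef, show -l2 * (δ : ℂ) = -(l2 * δ) by ring, Complex.exp_neg, inv_inv]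
  have hM : Mmat l1 l2 k δ = !![p⁻¹, -(Complex.I * l2 / (k:ℂ)) * q⁻¹;
      (Complex.I * l1 / (k:ℂ)) * p⁻¹, q⁻¹] := by
    rw [Mmat, e1, e2]
  have hN : Nmat l1 l2 k δ = !![p, (Complex.I * l2 / (k:ℂ)) * q;
      -(Complex.I * l1 / (k:ℂ)) * p, q] := by
    rw [Nmat]
  have hN0 : Nmat l1 l2 k 0 = !![1, Complex.I * l2 / (k:ℂ);
      -(Complex.I * l1 / (k:ℂ)), 1] := by
    rw [Nmat]; norm_num
  have hM0 : Mmat l1 l2 k 0 = !![1, -(Complex.I * l2 / (k:ℂ));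
      (Complex.I * l1 / (k:ℂ)), 1] := by
    rw [Mmat]; norm_num
  rw [hM, hN, hN0, hM0]
  -- identify X and E
  have hEE : E = p * q := by
    rw [hE, hpdef, hqdef, ← Complex.exp_add]; congr 1; ring
  have hXX : ((k:ℂ) ^ 2 - Complex.I * l1 * (Complex.I * l2))
      / ((k:ℂ) ^ 2 + Complex.I * l1 * (Complex.I * l2)) * (p - q) = X := by
    rw [hII, hX, hpdef, hqdef]; ring_nf
  -- sum and product of roots
  have hs : (((X ^ 2 * (X ^ 2 + 4 * E)) ^ (1 / 2 : ℂ))) ^ 2 = X ^ 2 * (X ^ 2 + 4 * E) := by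
    rcases eq_or_ne (X ^ 2 * (X ^ 2 + 4 * E)) 0 with h | h
    · rw [h, Complex.zero_cpow (by norm_num)]; simp
    · rw [sq, ← Complex.cpow_add _ _ h, show (1/2 : ℂ) + 1/2 = 1 by norm_num,
        Complex.cpow_one]
  have hsum : rp + rm = X ^ 2 + 2 * E := by rw [hrp, hrm]; ring
  have hprod : rp * rm = E ^ 2 := by
    rw [hrp, hrm]; linear_combination (-(1:ℂ)/4) * hs
  exact spec_char _ rp rm
    (by rw [key.1, hXX, ← hEE, hsum])
    (by rw [key.2, ← hEE, hprod])
end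

section
/- In the non-overlapping case δ = 0 one has X = 0 and r₊ = r₋ = 1, and the Schwarz iteration matrix satisfies R_0 = M_0⁻¹ N_0 N_0⁻¹ M_0 = Id; consequently the convergence factor satisfies ρ_cla(k, ω, Cp, Cs, 0) = max(|r₊|, |r₋|) = 1 for every admissible k, i.e. the non-overlapping classical Schwarz algorithm stagnates. -/
open Complex Matrix

lemma cpow_half_nonneg' (t : ℝ) (h : 0 ≤ t) :
    ((t:ℂ)) ^ (1/2 : ℂ) = ((Real.sqrt t : ℝ) : ℂ) := by
  rw [show (1/2 : ℂ) = ((1/2 : ℝ) : ℂ) by norm_num, ← Complex.ofReal_cpow h (1/2 : ℝ)]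
  norm_num [Real.sqrt_eq_rpow]

lemma cpow_half_neg' (t : ℝ) (h : t < 0) :
    ((t:ℂ)) ^ (1/2 : ℂ) = Complex.I * Real.sqrt (-t) := by
  rw [Complex.ofReal_cpow_of_nonpos h.le]
  have h1 : ((-t:ℝ):ℂ) ^ (1/2 : ℂ) = ((Real.sqrt (-t) : ℝ) : ℂ) :=
    cpow_half_nonneg' _ (by linarith)
  have h2 : Complex.exp (Real.pi * I * (1/2)) = Complex.I := by
    rw [show (Real.pi : ℂ) * I * (1/2) = (Real.pi/2 : ℝ) * I by push_cast; ring,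
      Complex.exp_mul_I]
    simp
  push_cast at h1 ⊢
  rw [h1, h2]; ring

/-- in the non-overlapping case `δ = 0` one has `X = 0`, `r₊ = r₋ = 1`,
`R_0 = M_0⁻¹ N_0 N_0⁻¹ M_0 = Id`, and the convergence factor
`ρ_cla = max(|r₊|, |r₋|) = 1`: the non-overlapping classical Schwarz method stagnates. -/
theorem schwarz_no_overlap_stagnates
    (μ lam ρ ω : ℝ) (hμ : 0 < μ) (hlam : 0 < lam) (hρ : 0 < ρ) (hω : 0 < ω)
    (Cp Cs : ℝ) (hCp : Cp = Real.sqrt ((lam + 2 * μ) / ρ)) (hCs : Cs = Real.sqrt (μ / ρ))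
    (k : ℝ) (hk : k ≠ 0)
    (l1 l2 : ℂ)
    (hl1 : l1 = ((k ^ 2 - ω ^ 2 / Cs ^ 2 : ℝ) : ℂ) ^ (1 / 2 : ℂ))
    (hl2 : l2 = ((k ^ 2 - ω ^ 2 / Cp ^ 2 : ℝ) : ℂ) ^ (1 / 2 : ℂ))
    (hadm : (k : ℂ) ^ 2 + l1 * l2 ≠ 0)
    (X E rp rm : ℂ)
    (hX : X = ((k : ℂ) ^ 2 + l1 * l2) / ((k : ℂ) ^ 2 - l1 * l2)
              * (Complex.exp (-l1 * (0 : ℝ)) - Complex.exp (-l2 * (0 : ℝ))))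
    (hE : E = Complex.exp (-((0 : ℝ) : ℂ) * (l1 + l2)))
    (hrp : rp = X ^ 2 / 2 + E + (X ^ 2 * (X ^ 2 + 4 * E)) ^ (1 / 2 : ℂ) / 2)
    (hrm : rm = X ^ 2 / 2 + E - (X ^ 2 * (X ^ 2 + 4 * E)) ^ (1 / 2 : ℂ) / 2) :
    X = 0 ∧ rp = 1 ∧ rm = 1
      ∧ (Mmat l1 l2 k 0)⁻¹ * Nmat l1 l2 k 0 * (Nmat l1 l2 k 0)⁻¹ * Mmat l1 l2 k 0 = 1
      ∧ max ‖rp‖ ‖rm‖ = 1 := by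
  have hX0 : X = 0 := by
    rw [hX]; simp
  have hE1 : E = 1 := by
    rw [hE]; simp
  have hrp1 : rp = 1 := by
    rw [hrp, hX0, hE1]
    norm_num [Complex.zero_cpow (show (1/2 : ℂ) ≠ 0 by norm_num)]
  have hrm1 : rm = 1 := by
    rw [hrm, hX0, hE1]
    norm_num [Complex.zero_cpow (show (1/2 : ℂ) ≠ 0 by norm_num)]
  -- positivity of speeds
  have hCs0 : 0 < Cs := hCs ▸ Real.sqrt_pos.mpr (div_pos hμ hρ)
  have hCp0 : 0 < Cp := hCp ▸ Real.sqrt_pos.mpr (div_pos (by linarith) hρ)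
  set a : ℝ := ω ^ 2 / Cs ^ 2 with ha
  set b : ℝ := ω ^ 2 / Cp ^ 2 with hb
  have ha0 : 0 < a := div_pos (by positivity) (by positivity)
  have hb0 : 0 < b := div_pos (by positivity) (by positivity)
  have hk2 : (0:ℝ) < k ^ 2 := by positivity
  have hkC : (k : ℂ) ≠ 0 := Complex.ofReal_ne_zero.mpr hk
  -- the key non-degeneracy: k² ≠ l1 l2
  have hne : (k : ℂ) ^ 2 - l1 * l2 ≠ 0 := by
    intro h
    have hkl : l1 * l2 = ((k ^ 2 : ℝ) : ℂ) := by push_cast; linear_combination -h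
    rcases le_or_gt 0 (k ^ 2 - a) with h1 | h1 <;> rcases le_or_gt 0 (k ^ 2 - b) with h2 | h2
    · rw [hl1, hl2, cpow_half_nonneg' _ h1, cpow_half_nonneg' _ h2] at hkl
      have hre := congrArg Complex.re hkl
      simp [← Complex.ofReal_pow] at hre
      have e1 : Real.sqrt (k ^ 2 - a) ^ 2 = k ^ 2 - a := Real.sq_sqrt h1
      have e2 : Real.sqrt (k ^ 2 - b) ^ 2 = k ^ 2 - b := Real.sq_sqrt h2
      nlinarith [Real.sqrt_nonneg (k ^ 2 - a), Real.sqrt_nonneg (k ^ 2 - b)]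
    · rw [hl1, hl2, cpow_half_nonneg' _ h1, cpow_half_neg' _ h2] at hkl
      have hre := congrArg Complex.re hkl
      simp [← Complex.ofReal_pow] at hre
      nlinarith [Real.sqrt_nonneg (k ^ 2 - a), Real.sqrt_nonneg (b - k ^ 2)]
    · rw [hl1, hl2, cpow_half_neg' _ h1, cpow_half_nonneg' _ h2] at hkl
      have hre := congrArg Complex.re hkl
      simp [← Complex.ofReal_pow] at hre
      nlinarith [Real.sqrt_nonneg (a - k ^ 2), Real.sqrt_nonneg (k ^ 2 - b)]
    · rw [hl1, hl2, cpow_half_neg' _ h1, cpow_half_neg' _ h2] at hkl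
      have hre := congrArg Complex.re hkl
      simp [← Complex.ofReal_pow] at hre
      nlinarith [Real.sqrt_nonneg (a - k ^ 2), Real.sqrt_nonneg (b - k ^ 2)]
  -- determinants
  have hdM : (Mmat l1 l2 k 0).det = ((k : ℂ) ^ 2 - l1 * l2) / (k : ℂ) ^ 2 := by
    simp [Mmat, Matrix.det_fin_two_of]
    field_simp
    ring_nf
    rw [Complex.I_sq]
    ring
  have hdN : (Nmat l1 l2 k 0).det = ((k : ℂ) ^ 2 - l1 * l2) / (k : ℂ) ^ 2 := by
    simp [Nmat, Matrix.det_fin_two_of]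
    field_simp
    ring_nf
    rw [Complex.I_sq]
    ring
  have hdet_ne : ((k : ℂ) ^ 2 - l1 * l2) / (k : ℂ) ^ 2 ≠ 0 :=
    div_ne_zero hne (pow_ne_zero 2 hkC)
  have huM : IsUnit (Mmat l1 l2 k 0).det := by
    rw [hdM]; exact isUnit_iff_ne_zero.mpr hdet_ne
  have huN : IsUnit (Nmat l1 l2 k 0).det := by
    rw [hdN]; exact isUnit_iff_ne_zero.mpr hdet_ne
  refine ⟨hX0, hrp1, hrm1, ?_, by rw [hrp1, hrm1]; simp⟩
  rw [mul_assoc ((Mmat l1 l2 k 0)⁻¹) (Nmat l1 l2 k 0) ((Nmat l1 l2 k 0)⁻¹),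
    Matrix.mul_nonsing_inv _ huN, mul_one, Matrix.nonsing_inv_mul _ huM]
end

section
/- Let 0 < Cs < Cp and ω > 0 be real numbers, and for k ∈ (ω/Cp, ω/Cs) define the real function g(k) = 2ω²·√(k² − ω²/Cp²)·(ω²/Cs² − k²) / (Cp²·(k⁴ + (ω²/Cs² − k²)(k² − ω²/Cp²))). Then the supremum of g over the interval (ω/Cp, ω/Cs) equals √2 · Cs · ω · (3Cp² − √(Cp⁴ + 8Cs⁴)) · √(Cp²√(Cp⁴ + 8Cs⁴) − Cp⁴ − 2Cs⁴) / (Cp · (Cp² + Cs²)^{3/2} · (√(Cp⁴ + 8Cs⁴) − Cp²)). -/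
lemma key_ineq (c d e x s t : ℝ) (ht : 0 < t) (ht2 : t ^ 2 = x)
    (hP : d * x ^ 2 + (c * d + 3 * e) * x - c * e = 0)
    (hcx : x ≤ c) (hdxe : 0 ≤ d * x + e) (he : 0 ≤ e) (hs : 0 ≤ s) :
    s * (c - s ^ 2) * (d * x + e) ≤ t * (c - x) * (d * s ^ 2 + e) := by
  have hid : t * (t * (c - x) * (d * s ^ 2 + e) - s * (c - s ^ 2) * (d * x + e))
      = (s - t) ^ 2 * ((d * x + e) * t * s + (c - x) * e) := by
    linear_combination (s * (s - t)) * hP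
      + (s ^ 2 * (c * d + d * x + 2 * e) - s * t * (d * x + e)) * ht2
  have h0 : 0 ≤ (s - t) ^ 2 * ((d * x + e) * t * s + (c - x) * e) := by
    apply mul_nonneg (sq_nonneg _)
    have h1 : 0 ≤ (d * x + e) * t * s := mul_nonneg (mul_nonneg hdxe ht.le) hs
    have h2 : 0 ≤ (c - x) * e := mul_nonneg (by linarith) he
    linarith
  by_contra hlt
  push_neg at hlt
  have : t * (t * (c - x) * (d * s ^ 2 + e) - s * (c - s ^ 2) * (d * x + e)) < 0 :=
    mul_neg_of_pos_of_neg ht (by linarith)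
  linarith [hid ▸ h0]

set_option maxHeartbeats 1000000 in
/-- the supremum over the interval of divergent Fourier frequencies
`(ω/Cp, ω/Cs)` of the first-order coefficient
`g(k) = 2ω²·√(k² − ω²/Cp²)·(ω²/Cs² − k²) / (Cp²·(k⁴ + (ω²/Cs² − k²)(k² − ω²/Cp²)))`
equals the explicit constant
`√2·Cs·ω·(3Cp² − √(Cp⁴+8Cs⁴))·√(Cp²√(Cp⁴+8Cs⁴) − Cp⁴ − 2Cs⁴)
    / (Cp·(Cp²+Cs²)^{3/2}·(√(Cp⁴+8Cs⁴) − Cp²))`. -/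
theorem sup_first_order_coefficient
    (Cp Cs ω : ℝ) (hCs : 0 < Cs) (hCsCp : Cs < Cp) (hω : 0 < ω)
    (g : ℝ → ℝ)
    (hg : ∀ k ∈ Set.Ioo (ω / Cp) (ω / Cs), g k =
        2 * ω ^ 2 * Real.sqrt (k ^ 2 - ω ^ 2 / Cp ^ 2) * (ω ^ 2 / Cs ^ 2 - k ^ 2)
          / (Cp ^ 2 * (k ^ 4 + (ω ^ 2 / Cs ^ 2 - k ^ 2) * (k ^ 2 - ω ^ 2 / Cp ^ 2)))) :
    sSup (g '' Set.Ioo (ω / Cp) (ω / Cs))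
      = Real.sqrt 2 * Cs * ω * (3 * Cp ^ 2 - Real.sqrt (Cp ^ 4 + 8 * Cs ^ 4))
          * Real.sqrt (Cp ^ 2 * Real.sqrt (Cp ^ 4 + 8 * Cs ^ 4) - Cp ^ 4 - 2 * Cs ^ 4)
          / (Cp * (Cp ^ 2 + Cs ^ 2) ^ ((3 : ℝ) / 2)
              * (Real.sqrt (Cp ^ 4 + 8 * Cs ^ 4) - Cp ^ 2)) := by
  have hCp : 0 < Cp := hCs.trans hCsCp
  obtain ⟨Q, hQdef⟩ : ∃ q : ℝ, Real.sqrt (Cp ^ 4 + 8 * Cs ^ 4) = q := ⟨_, rfl⟩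
  rw [hQdef]
  have hQ0 : 0 ≤ Q := hQdef ▸ Real.sqrt_nonneg _
  have hQ2 : Q ^ 2 = Cp ^ 4 + 8 * Cs ^ 4 := by
    rw [← hQdef]; exact Real.sq_sqrt (by positivity)
  have hQgt : Cp ^ 2 < Q := by
    rw [← hQdef]
    exact (Real.lt_sqrt (by positivity)).2 (by nlinarith [pow_pos hCs 4])
  have hQlt : Q < 3 * Cp ^ 2 := by
    rw [← hQdef]
    refine (Real.sqrt_lt' (by positivity)).2 ?_
    nlinarith [pow_lt_pow_left₀ hCsCp hCs.le (by norm_num : (4:ℕ) ≠ 0)]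
  obtain ⟨R, hRdef⟩ : ∃ r : ℝ, Cp ^ 2 * Q - Cp ^ 4 - 2 * Cs ^ 4 = r := ⟨_, rfl⟩
  rw [hRdef]
  have hR : 0 < R := by
    rw [← hRdef]
    have h4 : Cs ^ 4 < Cp ^ 4 := pow_lt_pow_left₀ hCsCp hCs.le (by norm_num : (4:ℕ) ≠ 0)
    have h1 : (Cp ^ 4 + 2 * Cs ^ 4) ^ 2 < (Cp ^ 2 * Q) ^ 2 := by
      have hq : (Cp ^ 2 * Q) ^ 2 = Cp ^ 4 * (Cp ^ 4 + 8 * Cs ^ 4) := by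
        rw [mul_pow, hQ2]; ring
      rw [hq]
      nlinarith [mul_lt_mul_of_pos_right h4 (pow_pos hCs 4)]
    have h2 : Cp ^ 4 + 2 * Cs ^ 4 < Cp ^ 2 * Q :=
      lt_of_pow_lt_pow_left₀ 2 (by positivity) h1
    linarith
  obtain ⟨a, ha⟩ : ∃ u : ℝ, ω ^ 2 / Cp ^ 2 = u := ⟨_, rfl⟩
  obtain ⟨b, hb⟩ : ∃ u : ℝ, ω ^ 2 / Cs ^ 2 = u := ⟨_, rfl⟩
  have hapos : 0 < a := ha ▸ (by positivity)
  have hbpos : 0 < b := hb ▸ (by positivity)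
  have hab : a < b := by
    rw [← ha, ← hb]
    exact div_lt_div_of_pos_left (by positivity) (by positivity) (by nlinarith)
  obtain ⟨c, hc⟩ : ∃ u : ℝ, b - a = u := ⟨_, rfl⟩
  obtain ⟨d, hd0⟩ : ∃ u : ℝ, a + b = u := ⟨_, rfl⟩
  obtain ⟨e, he0⟩ : ∃ u : ℝ, a ^ 2 = u := ⟨_, rfl⟩
  have hcpos : 0 < c := hc ▸ (by linarith)
  have hdpos : 0 < d := hd0 ▸ (by linarith)
  have hepos : 0 < e := he0 ▸ (by positivity)
  obtain ⟨x, hx0⟩ : ∃ u : ℝ, ω ^ 2 * R / (2 * Cp ^ 2 * Cs ^ 2 * (Cp ^ 2 + Cs ^ 2)) = u :=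
    ⟨_, rfl⟩
  have hxpos : 0 < x := by
    rw [← hx0]
    exact div_pos (mul_pos (by positivity) hR) (by positivity)
  have hcmx : c - x = ω ^ 2 * (3 * Cp ^ 2 - Q) / (2 * Cs ^ 2 * (Cp ^ 2 + Cs ^ 2)) := by
    rw [← hc, ← hx0, ← hb, ← ha, ← hRdef]
    field_simp
    ring
  have hcx : x < c := by
    have h1 : 0 < c - x := by
      rw [hcmx]
      exact div_pos (mul_pos (by positivity) (by linarith)) (by positivity)
    linarith
  have hdxe : d * x + e = ω ^ 4 * (Q - Cp ^ 2) / (2 * Cp ^ 2 * Cs ^ 4) := by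
    rw [← hd0, ← he0, ← hx0, ← ha, ← hb, ← hRdef]
    field_simp
    ring
  have hdxepos : 0 < d * x + e := by
    rw [hdxe]
    exact div_pos (mul_pos (by positivity) (by linarith)) (by positivity)
  have hRQ : R * (Cp ^ 2 * Q + Cp ^ 4 + 2 * Cs ^ 4) = 4 * Cs ^ 4 * (Cp ^ 4 - Cs ^ 4) := by
    rw [← hRdef]
    linear_combination (Cp ^ 4) * hQ2
  have hbrack : d * x + c * d + 3 * e
      = ω ^ 4 * (Cp ^ 2 * Q + Cp ^ 4 + 2 * Cs ^ 4) / (2 * Cp ^ 4 * Cs ^ 4) := by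
    have hdx : d * x = (d * x + e) - e := by ring
    rw [hdx, hdxe, ← he0, ← hc, ← hd0, ← ha, ← hb]
    field_simp
    ring
  have hP : d * x ^ 2 + (c * d + 3 * e) * x - c * e = 0 := by
    have h1 : x * (d * x + c * d + 3 * e) = c * e := by
      rw [hbrack, ← hx0, div_mul_div_comm,
        show ω ^ 2 * R * (ω ^ 4 * (Cp ^ 2 * Q + Cp ^ 4 + 2 * Cs ^ 4))
          = ω ^ 6 * (R * (Cp ^ 2 * Q + Cp ^ 4 + 2 * Cs ^ 4)) by ring,
        hRQ, ← hc, ← he0, ← ha, ← hb]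
      field_simp
      ring
    linear_combination h1
  obtain ⟨t, ht0⟩ : ∃ u : ℝ, Real.sqrt x = u := ⟨_, rfl⟩
  have ht : 0 < t := ht0 ▸ Real.sqrt_pos.2 hxpos
  have ht2 : t ^ 2 = x := by rw [← ht0]; exact Real.sq_sqrt hxpos.le
  obtain ⟨W, hWdef⟩ : ∃ u : ℝ, Real.sqrt (Cp ^ 2 + Cs ^ 2) = u := ⟨_, rfl⟩
  have hW : 0 < W := hWdef ▸ Real.sqrt_pos.2 (by positivity)
  have hW2 : W ^ 2 = Cp ^ 2 + Cs ^ 2 := by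
    rw [← hWdef]; exact Real.sq_sqrt (by positivity)
  have hrpow : (Cp ^ 2 + Cs ^ 2) ^ ((3 : ℝ) / 2) = W ^ 3 := by
    rw [← hWdef, show ((3 : ℝ) / 2) = (1 / 2 : ℝ) * (3 : ℕ) by norm_num,
      Real.rpow_mul (by positivity), Real.rpow_natCast, ← Real.sqrt_eq_rpow]
  have h2s : Real.sqrt 2 ^ 2 = 2 := Real.sq_sqrt (by norm_num)
  have hRs : Real.sqrt R ^ 2 = R := Real.sq_sqrt hR.le
  have hty : t = Real.sqrt 2 * ω * Real.sqrt R / (2 * Cp * Cs * W) := by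
    have hxy : x = (Real.sqrt 2 * ω * Real.sqrt R / (2 * Cp * Cs * W)) ^ 2 := by
      rw [div_pow, mul_pow, mul_pow, h2s, hRs, mul_pow, mul_pow, mul_pow, hW2, ← hx0]
      rw [div_eq_div_iff (by positivity) (by positivity)]
      ring
    rw [← ht0, hxy, Real.sqrt_sq (by positivity)]
  have hM0 : 2 * ω ^ 2 * t * (c - x) / (Cp ^ 2 * (d * x + e))
      = Real.sqrt 2 * Cs * ω * (3 * Cp ^ 2 - Q) * Real.sqrt R
        / (Cp * (Cp ^ 2 + Cs ^ 2) ^ ((3 : ℝ) / 2) * (Q - Cp ^ 2)) := by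
    rw [hrpow, hty, hcmx, hdxe]
    have hW3 : W ^ 3 = (Cp ^ 2 + Cs ^ 2) * W := by
      rw [pow_succ, hW2]
    rw [hW3]
    rw [div_eq_div_iff
      (mul_pos (pow_pos hCp 2) (div_pos (mul_pos (show (0:ℝ) < ω ^ 4 by positivity)
        (show (0:ℝ) < Q - Cp ^ 2 by linarith)) (by positivity))).ne'
      (mul_pos (mul_pos hCp (mul_pos (show (0:ℝ) < Cp ^ 2 + Cs ^ 2 by positivity) hW))
        (show (0:ℝ) < Q - Cp ^ 2 by linarith)).ne']
    field_simp
  apply IsGreatest.csSup_eq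
  constructor
  · -- the value is attained at k* = sqrt (a + x)
    have hmem : Real.sqrt (a + x) ∈ Set.Ioo (ω / Cp) (ω / Cs) := by
      constructor
      · apply (Real.lt_sqrt (by positivity)).2
        rw [div_pow, ha]
        linarith
      · apply (Real.sqrt_lt' (by positivity)).2
        rw [div_pow, hb]
        have := hc ▸ hcx
        linarith [hc ▸ hcx]
    refine ⟨Real.sqrt (a + x), hmem, ?_⟩
    rw [hg _ hmem, ha, hb]
    have hk2 : Real.sqrt (a + x) ^ 2 = a + x := Real.sq_sqrt (by positivity)
    have hk4 : Real.sqrt (a + x) ^ 4 = (a + x) ^ 2 := by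
      linear_combination (Real.sqrt (a + x) ^ 2 + a + x) * hk2
    have harg : Real.sqrt (a + x) ^ 2 - a = x := by rw [hk2]; ring
    rw [harg, ht0, hk4, hk2, ← hM0, ← hc, ← hd0, ← he0]
    ring
  · rintro y ⟨k, hk, rfl⟩
    rw [hg k hk, ha, hb]
    obtain ⟨hk1, hk2'⟩ := hk
    have hkpos : 0 < k := lt_trans (by positivity) hk1
    have hka : a < k ^ 2 := by
      rw [← ha, ← div_pow]
      exact pow_lt_pow_left₀ hk1 (by positivity) two_ne_zero
    have hkb : k ^ 2 < b := by
      rw [← hb, ← div_pow]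
      exact pow_lt_pow_left₀ hk2' hkpos.le two_ne_zero
    obtain ⟨s, hsdef⟩ : ∃ u : ℝ, Real.sqrt (k ^ 2 - a) = u := ⟨_, rfl⟩
    have hs0 : 0 ≤ s := hsdef ▸ Real.sqrt_nonneg _
    have hs2 : s ^ 2 = k ^ 2 - a := by rw [← hsdef]; exact Real.sq_sqrt (by linarith)
    have hk2s : k ^ 2 = s ^ 2 + a := by linarith
    have hk4s : k ^ 4 = (s ^ 2 + a) ^ 2 := by
      linear_combination (k ^ 2 + s ^ 2 + a) * hk2s
    have hkey := key_ineq c d e x s t ht ht2 hP hcx.le hdxepos.le hepos.le hs0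
    have hL : 2 * ω ^ 2 * Real.sqrt (k ^ 2 - a) * (b - k ^ 2)
          / (Cp ^ 2 * (k ^ 4 + (b - k ^ 2) * (k ^ 2 - a)))
        = 2 * ω ^ 2 * s * (c - s ^ 2) / (Cp ^ 2 * (d * s ^ 2 + e)) := by
      rw [hsdef, hk4s, hk2s, ← hc, ← hd0, ← he0]
      ring_nf
    have hden2 : 0 < Cp ^ 2 * (d * s ^ 2 + e) := by
      have h1 : 0 < d * s ^ 2 + e :=
        add_pos_of_nonneg_of_pos (mul_nonneg hdpos.le (sq_nonneg s)) hepos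
      positivity
    rw [hL, ← hM0, div_le_div_iff₀ hden2 (by positivity)]
    have h2 := mul_le_mul_of_nonneg_left hkey
      (show (0:ℝ) ≤ 2 * ω ^ 2 * Cp ^ 2 by positivity)
    have hgoal : 2 * ω ^ 2 * s * (c - s ^ 2) * (Cp ^ 2 * (d * x + e))
        = 2 * ω ^ 2 * Cp ^ 2 * (s * (c - s ^ 2) * (d * x + e)) := by ring
    have hgoal2 : 2 * ω ^ 2 * t * (c - x) * (Cp ^ 2 * (d * s ^ 2 + e))
        = 2 * ω ^ 2 * Cp ^ 2 * (t * (c - x) * (d * s ^ 2 + e)) := by ring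
    rw [hgoal, hgoal2]
    exact h2
end
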